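/- Suppose 𝒫 = (X ∪ {z}, 𝐫 ∪ {w}) is aspherical (δ_𝒫 is injective) and F decomposes as the internal semidirect product N₀ ⋊ F₁, i.e. N₀ ∩ F₁ = {1} and N₀·F₁ = F, with F₁ acting on N₀ by conjugation. Then the subpresentation 𝒫₁ = (X, 𝐫) is aspherical (δ_{𝒫₁} is injective). -/

import Mathlib

universe u

/-- The Peiffer relators of a presentation with relators `rels`: the words
`(ᵘs)(ᵛt)(ᵘs)⁻¹(^{u s u⁻¹ v}t)⁻¹`, written on the alphabet of symbols `ᵘs = (u, s)`. -/
def peifferRels {A : Type u} (rels : Set (FreeGroup A)) :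
    Set (FreeGroup (FreeGroup A × ↥rels)) :=
  {x | ∃ (u v : FreeGroup A) (s t : ↥rels),
    x = FreeGroup.of (u, s) * FreeGroup.of (v, t) * (FreeGroup.of (u, s))⁻¹ *
      (FreeGroup.of (u * (s : FreeGroup A) * u⁻¹ * v, t))⁻¹}

/-- The free crossed module quotient `H(𝒬)/P(𝒬)` of a presentation `𝒬 = (A, rels)`. -/
abbrev CrossedQuot {A : Type u} (rels : Set (FreeGroup A)) :=
  PresentedGroup (peifferRels rels)

/-- The boundary homomorphism `δ : H(𝒬)/P(𝒬) → FG(A)` induced by `ᵘs ↦ u s u⁻¹`. -/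
def delta {A : Type u} (rels : Set (FreeGroup A)) :
    CrossedQuot rels →* FreeGroup A :=
  PresentedGroup.toGroup
    (f := fun p : FreeGroup A × ↥rels => p.1 * (p.2 : FreeGroup A) * p.1⁻¹) (by
    rintro x ⟨u, v, s, t, rfl⟩
    simp only [map_mul, map_inv, FreeGroup.lift_apply_of]
    group)

lemma peiffer_mk_eq_one {A : Type u} (rels : Set (FreeGroup A))
    {r : FreeGroup (FreeGroup A × ↥rels)} (hr : r ∈ peifferRels rels) :
    PresentedGroup.mk (peifferRels rels) r = 1 :=
  (QuotientGroup.eq_one_iff _).2 (Subgroup.subset_normalClosure hr)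

/-- If `𝒫 = (X ∪ {z}, 𝐫 ∪ {w})` is aspherical (`δ_𝒫` is injective) and the free group
`F = FG(X ∪ {z})` decomposes as the internal semidirect product `N₀ ⋊ F₁`, where `N₀` is
the normal closure of `w` and `F₁` is the subgroup generated by `X`, then the
subpresentation `𝒫₁ = (X, 𝐫)` is aspherical (`δ_{𝒫₁}` is injective). -/
theorem subpresentation_aspherical_of_semidirect {X : Type u}
    (rels : Set (FreeGroup X)) (w : FreeGroup (Option X))
    (ι : FreeGroup X →* FreeGroup (Option X))
    (hι : ∀ x : X, ι (FreeGroup.of x) = FreeGroup.of (some x))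
    (hasp : Function.Injective (delta (ι '' rels ∪ {w})))
    (hmeet : Subgroup.normalClosure ({w} : Set (FreeGroup (Option X))) ⊓ ι.range = ⊥)
    (hjoin : ∀ f : FreeGroup (Option X),
      ∃ n ∈ Subgroup.normalClosure ({w} : Set (FreeGroup (Option X))),
        ∃ g ∈ ι.range, f = n * g) :
    Function.Injective (delta rels) := by
  classical
  set N := Subgroup.normalClosure ({w} : Set (FreeGroup (Option X))) with hN
  -- ι is injective, since it has a retraction
  have ιinj : Function.Injective ι := by
    have hρ : (FreeGroup.lift (fun o : Option X => o.elim 1 FreeGroup.of)).comp ι =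
        MonoidHom.id (FreeGroup X) := by
      apply FreeGroup.ext_hom
      intro x
      simp [hι]
    intro x y hxy
    have := congrArg (FreeGroup.lift (fun o : Option X => o.elim 1 FreeGroup.of)) hxy
    calc x = ((FreeGroup.lift (fun o : Option X => o.elim 1 FreeGroup.of)).comp ι) x := by
            rw [hρ]; rfl
      _ = ((FreeGroup.lift (fun o : Option X => o.elim 1 FreeGroup.of)).comp ι) y := this
      _ = y := by rw [hρ]; rfl
  -- the projection `a : FreeGroup (Option X) → FreeGroup X` from the semidirect decomposition
  choose n hn g hg hf using hjoin
  choose a ha using hg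
  -- uniqueness of the decomposition
  have huniq : ∀ (f n₁ : FreeGroup (Option X)) (a₁ : FreeGroup X),
      n₁ ∈ N → f = n₁ * ι a₁ → a f = a₁ := by
    intro f n₁ a₁ hn₁ hfa
    have h1 : n f * ι (a f) = n₁ * ι a₁ := by rw [ha, ← hf, hfa]
    have h2 : n₁⁻¹ * n f = ι a₁ * (ι (a f))⁻¹ := by
      calc n₁⁻¹ * n f = n₁⁻¹ * (n f * ι (a f)) * (ι (a f))⁻¹ := by group
        _ = n₁⁻¹ * (n₁ * ι a₁) * (ι (a f))⁻¹ := by rw [h1]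
        _ = ι a₁ * (ι (a f))⁻¹ := by group
    have h3 : n₁⁻¹ * n f ∈ N ⊓ ι.range := by
      refine Subgroup.mem_inf.2 ⟨N.mul_mem (N.inv_mem hn₁) (hn f), ?_⟩
      rw [h2]
      exact (ι.range).mul_mem ⟨a₁, rfl⟩ ((ι.range).inv_mem ⟨a f, rfl⟩)
    rw [hmeet] at h3
    have h4 : ι a₁ * (ι (a f))⁻¹ = 1 := by rw [← h2]; exact h3
    have h5 : ι a₁ = ι (a f) := by
      rw [mul_inv_eq_one] at h4; exact h4
    exact (ιinj h5).symm
  have a_ι : ∀ x : FreeGroup X, a (ι x) = x := fun x =>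
    huniq (ι x) 1 x (one_mem N) (by rw [one_mul])
  have a_mul : ∀ u v : FreeGroup (Option X), a (u * v) = a u * a v := by
    intro u v
    refine huniq (u * v) (n u * (ι (a u) * n v * (ι (a u))⁻¹)) (a u * a v) ?_ ?_
    · exact mul_mem (hn u) ((Subgroup.normalClosure_normal).conj_mem _ (hn v) _)
    · rw [map_mul]
      calc u * v = (n u * ι (a u)) * (n v * ι (a v)) := by rw [ha, ha, ← hf, ← hf]
        _ = n u * (ι (a u) * n v * (ι (a u))⁻¹) * (ι (a u) * ι (a v)) := by group
  have a_one : a 1 = 1 := by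
    have := a_ι 1; rwa [map_one] at this
  have a_inv : ∀ u : FreeGroup (Option X), a u⁻¹ = (a u)⁻¹ := by
    intro u
    have := a_mul u u⁻¹
    rw [mul_inv_cancel, a_one] at this
    exact (inv_eq_of_mul_eq_one_right this.symm).symm
  have a_N : ∀ m : FreeGroup (Option X), m ∈ N → a m = 1 := fun m hm =>
    huniq m m 1 hm (by rw [map_one, mul_one])
  have wN : w ∈ N := Subgroup.subset_normalClosure rfl
  set big : Set (FreeGroup (Option X)) := ι '' rels ∪ {w} with hbig
  -- the forward homomorphism Φ
  have fmem : ∀ s : ↥rels, ι (s : FreeGroup X) ∈ big := fun s =>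
    Or.inl ⟨(s : FreeGroup X), s.2, rfl⟩
  obtain ⟨Φ, hΦ⟩ : ∃ Φ : CrossedQuot rels →* CrossedQuot big,
      ∀ (u : FreeGroup X) (s : ↥rels), Φ (PresentedGroup.of (u, s)) =
        PresentedGroup.of (ι u, (⟨ι (s : FreeGroup X), fmem s⟩ : ↥big)) := by
    refine ⟨PresentedGroup.toGroup
      (f := fun p : FreeGroup X × ↥rels =>
        (PresentedGroup.of (ι p.1, (⟨ι (p.2 : FreeGroup X), fmem p.2⟩ : ↥big)) :
          CrossedQuot big)) ?_, fun u s => PresentedGroup.toGroup.of _⟩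
    rintro r ⟨u, v, s, t, rfl⟩
    simp only [map_mul, map_inv, FreeGroup.lift_apply_of]
    exact peiffer_mk_eq_one big
      ⟨ι u, ι v, ⟨ι (s : FreeGroup X), fmem s⟩, ⟨ι (t : FreeGroup X), fmem t⟩, rfl⟩
  -- the backward homomorphism Ψ
  obtain ⟨Ψ, hΨ⟩ : ∃ Ψ : CrossedQuot big →* CrossedQuot rels,
      ∀ (u : FreeGroup (Option X)) (s : ↥big), Ψ (PresentedGroup.of (u, s)) =
        (if h : (s : FreeGroup (Option X)) ∈ ι '' rels then
          (PresentedGroup.of (a u, (⟨h.choose, h.choose_spec.1⟩ : ↥rels)) : CrossedQuot rels)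
         else 1) := by
    refine ⟨PresentedGroup.toGroup
      (f := fun p : FreeGroup (Option X) × ↥big =>
        (if h : (p.2 : FreeGroup (Option X)) ∈ ι '' rels then
          (PresentedGroup.of (a p.1, (⟨h.choose, h.choose_spec.1⟩ : ↥rels)) : CrossedQuot rels)
         else 1)) ?_, fun u s => PresentedGroup.toGroup.of _⟩
    rintro r ⟨u, v, s, t, rfl⟩
    simp only [map_mul, map_inv, FreeGroup.lift_apply_of]
    by_cases ht : (t : FreeGroup (Option X)) ∈ ι '' rels
    · by_cases hs : (s : FreeGroup (Option X)) ∈ ι '' rels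
      · simp only [dif_pos hs, dif_pos ht]
        have has : a (s : FreeGroup (Option X)) = hs.choose := by
          conv_lhs => rw [← hs.choose_spec.2]
          rw [a_ι]
        have h4 : a (u * (s : FreeGroup (Option X)) * u⁻¹ * v) =
            a u * hs.choose * (a u)⁻¹ * a v := by
          rw [a_mul, a_mul, a_mul, a_inv, has]
        rw [h4]
        exact peiffer_mk_eq_one rels
          ⟨a u, a v, ⟨hs.choose, hs.choose_spec.1⟩, ⟨ht.choose, ht.choose_spec.1⟩, rfl⟩
      · -- s = w
        have hsw : (s : FreeGroup (Option X)) = w := s.2.resolve_left hs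
        have hconj : u * (s : FreeGroup (Option X)) * u⁻¹ ∈ N := by
          rw [hsw]; exact (Subgroup.normalClosure_normal).conj_mem _ wN _
        have h4 : a (u * (s : FreeGroup (Option X)) * u⁻¹ * v) = a v := by
          rw [show u * (s : FreeGroup (Option X)) * u⁻¹ * v =
            (u * (s : FreeGroup (Option X)) * u⁻¹) * v by group, a_mul,
            a_N _ hconj, one_mul]
        simp only [dif_neg hs, dif_pos ht]
        rw [h4]
        group
    · simp only [dif_neg ht]
      by_cases hs : (s : FreeGroup (Option X)) ∈ ι '' rels
      · simp only [dif_pos hs]; group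
      · simp only [dif_neg hs]; group
  -- Ψ ∘ Φ = id
  have hretr : ∀ q : CrossedQuot rels, Ψ (Φ q) = q := by
    have : Ψ.comp Φ = MonoidHom.id (CrossedQuot rels) := by
      apply PresentedGroup.ext
      rintro ⟨u, s⟩
      simp only [MonoidHom.comp_apply, MonoidHom.id_apply]
      rw [hΦ, hΨ]
      have hmem : ι (s : FreeGroup X) ∈ ι '' rels := ⟨(s : FreeGroup X), s.2, rfl⟩
      rw [dif_pos hmem]
      congr 1
      refine Prod.ext (a_ι u) (Subtype.ext ?_)
      exact ιinj hmem.choose_spec.2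
    intro q
    have := congrArg (fun φ : CrossedQuot rels →* CrossedQuot rels => φ q) this
    simpa using this
  -- the commuting square δ_big ∘ Φ = ι ∘ δ_small
  have hcomm : (delta big).comp Φ = ι.comp (delta rels) := by
    apply PresentedGroup.ext
    rintro ⟨u, s⟩
    simp only [MonoidHom.comp_apply]
    rw [hΦ]
    show (delta big) (PresentedGroup.of _) = ι ((delta rels) (PresentedGroup.of _))
    rw [delta, delta, PresentedGroup.toGroup.of, PresentedGroup.toGroup.of]
    simp [map_mul, map_inv]
  -- conclude
  intro q₁ q₂ hq
  have h1 : (delta big) (Φ q₁) = (delta big) (Φ q₂) := by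
    have e1 := congrArg (fun φ : CrossedQuot rels →* FreeGroup (Option X) => φ q₁) hcomm
    have e2 := congrArg (fun φ : CrossedQuot rels →* FreeGroup (Option X) => φ q₂) hcomm
    simp only [MonoidHom.comp_apply] at e1 e2
    rw [e1, e2, hq]
  have h2 : Φ q₁ = Φ q₂ := hasp h1
  rw [← hretr q₁, ← hretr q₂, h2]
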